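/- Let H be a real inner product space, let L > 0 and δ > 0, and let e_u, e_ξ, f, s, e_u', e_ξ', f', s', g₁, g₂ ∈ H satisfy the two Robin error relations L·e_u' + f' = (L/2)(e_u + e_ξ) + (1/2)(f + s) + g₁ and L·e_ξ' − s' = (L/2)(e_u + e_ξ) − (1/2)(f + s) + g₂. Then ⟨f', e_u'⟩ − ⟨s', e_ξ'⟩ ≤ (L/2)·[ (1+δ)(‖e_u‖² + ‖e_ξ‖²) − ‖e_u'‖² − ‖e_ξ'‖² ] + (1/(2L))·[ (1+δ)(‖f‖² + ‖s‖²) − ‖f'‖² − ‖s'‖² ] + ((δ+5)/(2δL))·( ‖g₁‖² + ‖g₂‖² ). -/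

import Mathlib

open scoped RealInnerProductSpace

section Aux

variable {H : Type*} [NormedAddCommGroup H] [InnerProductSpace ℝ H]

lemma aux_norm_smul_sq (c : ℝ) (x : H) : ‖c • x‖ ^ 2 = c ^ 2 * ‖x‖ ^ 2 := by
  rw [norm_smul, mul_pow, Real.norm_eq_abs, sq_abs]

lemma aux_young (δ : ℝ) (hδ : 0 < δ) (A g : H) :
    ‖A + g‖ ^ 2 ≤ (1 + δ) * ‖A‖ ^ 2 + (1 + 1/δ) * ‖g‖ ^ 2 := by
  have hexp := norm_add_sq_real A g
  have hcs := real_inner_le_norm A g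
  have key : 2 * ⟪A, g⟫ ≤ δ * ‖A‖ ^ 2 + (1/δ) * ‖g‖ ^ 2 := by
    have h' : δ * (2 * ⟪A, g⟫) ≤ δ * (δ * ‖A‖ ^ 2 + (1/δ) * ‖g‖ ^ 2) := by
      have h0 : δ * (δ * ‖A‖ ^ 2 + (1/δ) * ‖g‖ ^ 2) = δ^2 * ‖A‖^2 + ‖g‖^2 := by
        field_simp
      rw [h0]
      nlinarith [sq_nonneg (δ * ‖A‖ - ‖g‖), hδ]
    exact le_of_mul_le_mul_left h' hδ
  nlinarith [key, hexp]

lemma aux_two (x y : H) : ‖x + y‖ ^ 2 ≤ 2 * (‖x‖ ^ 2 + ‖y‖ ^ 2) := by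
  have hexp := norm_add_sq_real x y
  have hcs := real_inner_le_norm x y
  nlinarith [sq_nonneg (‖x‖ - ‖y‖)]

end Aux

/-- Per-time-step interface estimate `J ≤ Q₁ + Q₂ + Q₃` in the proof of Theorem 4.1,
obtained from the exact interface identity together with Cauchy–Schwarz and Young. -/
theorem stmt5 {H : Type*} [NormedAddCommGroup H] [InnerProductSpace ℝ H]
    (L δ : ℝ) (hL : 0 < L) (hδ : 0 < δ)
    (eu eξ f s eu' eξ' f' s' g₁ g₂ : H)
    (h1 : L • eu' + f' = (L / 2) • (eu + eξ) + ((1 : ℝ) / 2) • (f + s) + g₁)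
    (h2 : L • eξ' - s' = (L / 2) • (eu + eξ) - ((1 : ℝ) / 2) • (f + s) + g₂) :
    ⟪f', eu'⟫ - ⟪s', eξ'⟫ ≤
      (L / 2) * ((1 + δ) * (‖eu‖ ^ 2 + ‖eξ‖ ^ 2) - ‖eu'‖ ^ 2 - ‖eξ'‖ ^ 2)
      + (1 / (2 * L)) * ((1 + δ) * (‖f‖ ^ 2 + ‖s‖ ^ 2) - ‖f'‖ ^ 2 - ‖s'‖ ^ 2)
      + ((δ + 5) / (2 * δ * L)) * (‖g₁‖ ^ 2 + ‖g₂‖ ^ 2) := by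
  set a := eu + eξ with ha
  set b := f + s with hb
  set A := (L / 2) • a + ((1 : ℝ) / 2) • b with hA
  set B := (L / 2) • a - ((1 : ℝ) / 2) • b with hB
  -- expansion of the left-hand sides
  have n1 : ‖L • eu' + f'‖ ^ 2 = L ^ 2 * ‖eu'‖ ^ 2 + 2 * L * ⟪f', eu'⟫ + ‖f'‖ ^ 2 := by
    rw [norm_add_sq_real, aux_norm_smul_sq, real_inner_smul_left, real_inner_comm]
    ring
  have n2 : ‖L • eξ' - s'‖ ^ 2 = L ^ 2 * ‖eξ'‖ ^ 2 - 2 * L * ⟪s', eξ'⟫ + ‖s'‖ ^ 2 := by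
    rw [norm_sub_sq_real, aux_norm_smul_sq, real_inner_smul_left, real_inner_comm]
    ring
  -- parallelogram identity
  have par : ‖A‖ ^ 2 + ‖B‖ ^ 2 = (L ^ 2 / 2) * ‖a‖ ^ 2 + (1 / 2) * ‖b‖ ^ 2 := by
    rw [hA, hB, norm_add_sq_real, norm_sub_sq_real, aux_norm_smul_sq, aux_norm_smul_sq]
    ring
  -- Young's inequalities for the defect terms
  have y1 : ‖A + g₁‖ ^ 2 ≤ (1 + δ) * ‖A‖ ^ 2 + (1 + 1/δ) * ‖g₁‖ ^ 2 := aux_young δ hδ A g₁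
  have y2 : ‖B + g₂‖ ^ 2 ≤ (1 + δ) * ‖B‖ ^ 2 + (1 + 1/δ) * ‖g₂‖ ^ 2 := aux_young δ hδ B g₂
  -- triangle-type bounds
  have t1 : ‖a‖ ^ 2 ≤ 2 * (‖eu‖ ^ 2 + ‖eξ‖ ^ 2) := aux_two eu eξ
  have t2 : ‖b‖ ^ 2 ≤ 2 * (‖f‖ ^ 2 + ‖s‖ ^ 2) := aux_two f s
  -- the exact identity
  have id1 : L ^ 2 * ‖eu'‖ ^ 2 + 2 * L * ⟪f', eu'⟫ + ‖f'‖ ^ 2 = ‖A + g₁‖ ^ 2 := by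
    rw [← n1, h1, hA]
  have id2 : L ^ 2 * ‖eξ'‖ ^ 2 - 2 * L * ⟪s', eξ'⟫ + ‖s'‖ ^ 2 = ‖B + g₂‖ ^ 2 := by
    rw [← n2, h2, hB]
  -- key multiplied inequality
  have hδ' : (0:ℝ) < 1 + 1/δ := by positivity
  have hG1 : (0:ℝ) ≤ ‖g₁‖ ^ 2 := by positivity
  have hG2 : (0:ℝ) ≤ ‖g₂‖ ^ 2 := by positivity
  have hc : (1 + 1/δ) ≤ (δ + 5) / δ := by
    rw [one_add_div hδ.ne', div_le_div_iff₀ hδ hδ]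
    nlinarith
  have hcg : (1 + 1/δ) * (‖g₁‖ ^ 2 + ‖g₂‖ ^ 2) ≤ (δ + 5) / δ * (‖g₁‖ ^ 2 + ‖g₂‖ ^ 2) := by
    apply mul_le_mul_of_nonneg_right hc (by positivity)
  have m1 : (1 + δ) * ((L ^ 2 / 2) * ‖a‖ ^ 2) ≤ (1 + δ) * ((L ^ 2 / 2) * (2 * (‖eu‖ ^ 2 + ‖eξ‖ ^ 2))) := by
    apply mul_le_mul_of_nonneg_left _ (by positivity)
    apply mul_le_mul_of_nonneg_left t1 (by positivity)
  have m2 : (1 + δ) * ((1 / 2) * ‖b‖ ^ 2) ≤ (1 + δ) * ((1 / 2) * (2 * (‖f‖ ^ 2 + ‖s‖ ^ 2))) := by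
    apply mul_le_mul_of_nonneg_left _ (by positivity)
    apply mul_le_mul_of_nonneg_left t2 (by positivity)
  have K : 2 * L * (⟪f', eu'⟫ - ⟪s', eξ'⟫) ≤
      L ^ 2 * ((1 + δ) * (‖eu‖ ^ 2 + ‖eξ‖ ^ 2) - ‖eu'‖ ^ 2 - ‖eξ'‖ ^ 2)
      + ((1 + δ) * (‖f‖ ^ 2 + ‖s‖ ^ 2) - ‖f'‖ ^ 2 - ‖s'‖ ^ 2)
      + ((δ + 5) / δ) * (‖g₁‖ ^ 2 + ‖g₂‖ ^ 2) := by
    have par' : (1 + δ) * ‖A‖ ^ 2 + (1 + δ) * ‖B‖ ^ 2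
        = (1 + δ) * ((L ^ 2 / 2) * ‖a‖ ^ 2) + (1 + δ) * ((1 / 2) * ‖b‖ ^ 2) := by
      linear_combination (1 + δ) * par
    linarith [id1, id2, y1, y2, par', m1, m2, hcg]
  have h2L : (0:ℝ) < 2 * L := by positivity
  rw [← mul_le_mul_iff_right₀ h2L]
  calc 2 * L * (⟪f', eu'⟫ - ⟪s', eξ'⟫) ≤ _ := K
    _ = 2 * L * ((L / 2) * ((1 + δ) * (‖eu‖ ^ 2 + ‖eξ‖ ^ 2) - ‖eu'‖ ^ 2 - ‖eξ'‖ ^ 2)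
      + (1 / (2 * L)) * ((1 + δ) * (‖f‖ ^ 2 + ‖s‖ ^ 2) - ‖f'‖ ^ 2 - ‖s'‖ ^ 2)
      + ((δ + 5) / (2 * δ * L)) * (‖g₁‖ ^ 2 + ‖g₂‖ ^ 2)) := by
      field_simp
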